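/- Let u be a unit vector inducing an S-basis with cos φ = g(u,Su), 1−2cos²φ > 0. Then e₁ = Su, e₂ = (u − cos φ·Su + cos φ·S³u)/√(1−2cos²φ), e₃ = S³u are pairwise g-orthonormal, and g̃(e₁,e₁)=g̃(e₃,e₃)=2cos φ, g̃(e₂,e₂)=−2cos φ, g̃(e₁,e₂)=√(1−2cos²φ), g̃(e₂,e₃)=−√(1−2cos²φ), g̃(e₁,e₃)=0. -/

import Mathlib

set_option maxHeartbeats 1000000


theorem sphere_equation_alpha2 {V : Type*} [AddCommGroup V] [Module ℝ V]
    (g : V →ₗ[ℝ] V →ₗ[ℝ] ℝ) (S : V →ₗ[ℝ] V)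
    (hsym : ∀ u v : V, g u v = g v u)
    (hpos : ∀ v : V, v ≠ 0 → 0 < g v v)
    (hS4 : ∀ v : V, S (S (S (S v))) = -v)
    (hcomp : ∀ u v : V, g (S u) (S v) = g u v)
    (gt : V → V → ℝ) (hgt : ∀ u v : V, gt u v = g u (S v) + g (S u) v)
    (u : V) (hu : g u u = 1)
    (hind : LinearIndependent ℝ ![u, S u, S (S u), S (S (S u))])
    (c : ℝ) (hc : c = g u (S u)) (hc2 : 0 < 1 - 2 * c ^ 2)
    (e₁ e₂ e₃ : V)
    (he₁ : e₁ = S u)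
    (he₂ : e₂ = (Real.sqrt (1 - 2 * c ^ 2))⁻¹ • (u + (-c) • S u + c • S (S (S u))))
    (he₃ : e₃ = S (S (S u))) :
    (g e₁ e₁ = 1 ∧ g e₂ e₂ = 1 ∧ g e₃ e₃ = 1 ∧
     g e₁ e₂ = 0 ∧ g e₁ e₃ = 0 ∧ g e₂ e₃ = 0) ∧
    (gt e₁ e₁ = 2 * c ∧ gt e₃ e₃ = 2 * c ∧ gt e₂ e₂ = -(2 * c) ∧
     gt e₁ e₂ = Real.sqrt (1 - 2 * c ^ 2) ∧
     gt e₂ e₃ = -Real.sqrt (1 - 2 * c ^ 2) ∧ gt e₁ e₃ = 0) := by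
  subst he₁ he₂ he₃
  set r := Real.sqrt (1 - 2 * c ^ 2) with hr
  have h01 : g u (S u) = c := hc.symm
  have hr2 : r ^ 2 = 1 - 2 * c ^ 2 := Real.sq_sqrt hc2.le
  have hrne : r ≠ 0 := by
    intro h; rw [h] at hr2; simp at hr2; nlinarith
  -- scalar inner products
  have h11 : g (S u) (S u) = 1 := by rw [hcomp]; exact hu
  have h12 : g (S u) (S (S u)) = c := by rw [hcomp]; exact h01
  have h22 : g (S (S u)) (S (S u)) = 1 := by rw [hcomp, hcomp]; exact hu
  have h23 : g (S (S u)) (S (S (S u))) = c := by rw [hcomp, hcomp]; exact h01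
  have h33 : g (S (S (S u))) (S (S (S u))) = 1 := by rw [hcomp, hcomp, hcomp]; exact hu
  have h02 : g u (S (S u)) = 0 := by
    have h1 : g (S (S (S (S u)))) (S (S u)) = g u (S (S u)) := by
      rw [hcomp, hcomp, hsym]
    rw [hS4, map_neg, LinearMap.neg_apply] at h1
    linarith
  have h03 : g u (S (S (S u))) = -c := by
    have h1 : g (S (S (S (S u)))) (S u) = g (S (S (S u))) u := hcomp _ _
    rw [hS4, map_neg, LinearMap.neg_apply, hsym (S (S (S u))) u] at h1
    linarith
  have h13 : g (S u) (S (S (S u))) = 0 := by rw [hcomp]; exact h02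
  have h10 : g (S u) u = c := by rw [hsym]; exact h01
  have h20 : g (S (S u)) u = 0 := by rw [hsym]; exact h02
  have h21 : g (S (S u)) (S u) = c := by rw [hsym]; exact h12
  have h30 : g (S (S (S u))) u = -c := by rw [hsym]; exact h03
  have h31 : g (S (S (S u))) (S u) = 0 := by rw [hsym]; exact h13
  have h32 : g (S (S (S u))) (S (S u)) = c := by rw [hsym]; exact h23
  have h00 : g u u = 1 := hu
  simp only [hgt, map_add, map_smul, map_neg, LinearMap.add_apply, LinearMap.smul_apply,
    LinearMap.neg_apply, smul_eq_mul, hS4, h00, h10, h20, h30, h11, h21, h31, h12, h22, h32,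
    h13, h23, h33, h02, h03, h01, neg_smul]
  refine ⟨⟨?_, ?_, ?_, ?_, ?_, ?_⟩, ?_, ?_, ?_, ?_, ?_, ?_⟩
  · trivial
  · field_simp; linarith [hr2]
  · trivial
  · field_simp; ring
  · trivial
  · field_simp; ring
  · ring
  · ring
  · field_simp; linear_combination (2*c) * hr2
  · field_simp; linarith [hr2]
  · field_simp; linarith [hr2]
  · ring
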